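/- Let L = ⊕_{i≥1} L_i be an ℕ-graded Lie algebra over a field k. Then L is a free Lie algebra if and only if H₂(L,k) = 0. -/

import Mathlib

universe u

/-- An ℕ-grading (by positive degrees) of a Lie algebra `L` over `k`:
`L = ⊕_{i ≥ 1} L_i` with `⁅L_i, L_j⁆ ⊆ L_{i+j}`.  The component of degree `0` is zero. -/
structure LieGrading (k : Type u) [Field k] (L : Type u) [LieRing L] [LieAlgebra k L] where
  G : ℕ → Submodule k L
  zero_eq_bot : G 0 = ⊥
  iSup_eq_top : iSup G = ⊤
  indep : iSupIndep G
  bracket_mem : ∀ i j x y, x ∈ G i → y ∈ G j → ⁅x, y⁆ ∈ G (i + j)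


open FreeLieAlgebra
open scoped TensorProduct
open DFinsupp

variable (k : Type u) [Field k]

section HopfH2

variable (A : Type u) [LieRing A] [LieAlgebra k A]

/-- The canonical free presentation `F(A) → A` (the lift of the identity map of the
underlying type of `A`). -/
noncomputable def canPres : FreeLieAlgebra k A →ₗ⁅k⁆ A := FreeLieAlgebra.lift k id

/-- The relation ideal `R` of the canonical free presentation of `A`. -/
noncomputable def canRel : LieIdeal k (FreeLieAlgebra k A) := (canPres k A).ker

/-- `H₂(A,k)` computed by the Hopf formula `(R ∩ [F,F]) / [R,F]` from the canonical free
presentation `A = F/R`, `F = F(A)`. -/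
noncomputable def hopfH2 : Type u :=
  ↥((canRel k A : Submodule k (FreeLieAlgebra k A)) ⊓
      ((⁅(⊤ : LieIdeal k (FreeLieAlgebra k A)), (⊤ : LieIdeal k (FreeLieAlgebra k A))⁆ :
        LieIdeal k (FreeLieAlgebra k A)) : Submodule k (FreeLieAlgebra k A))) ⧸
    (Submodule.comap
      ((canRel k A : Submodule k (FreeLieAlgebra k A)) ⊓
        ((⁅(⊤ : LieIdeal k (FreeLieAlgebra k A)), (⊤ : LieIdeal k (FreeLieAlgebra k A))⁆ :
          LieIdeal k (FreeLieAlgebra k A)) : Submodule k (FreeLieAlgebra k A))).subtype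
      ((⁅canRel k A, (⊤ : LieIdeal k (FreeLieAlgebra k A))⁆ :
        LieIdeal k (FreeLieAlgebra k A)) : Submodule k (FreeLieAlgebra k A)))

noncomputable instance : AddCommGroup (hopfH2 k A) := by unfold hopfH2; infer_instance

noncomputable instance : Module k (hopfH2 k A) := by unfold hopfH2; infer_instance

end HopfH2





section Helpers
variable {k : Type u} [Field k] {M : Type u} [AddCommGroup M] [Module k M]

/-- Components of a zero sum in an independent family vanish. -/
lemma sum_eq_zero_component {G : ℕ → Submodule k M} (hG : iSupIndep G)
    (f : Π₀ n, G n)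
    (hf : DFinsupp.lsum ℕ (M := fun n ↦ ↥(G n)) (fun n => (G n).subtype) f = 0) : f = 0 := by
  have := hG.dfinsupp_lsum_injective (p := G)
  apply this
  simpa using hf

lemma mem_of_iSup_graded {G D : ℕ → Submodule k M} (hG : iSupIndep G)
    (hDG : ∀ m, D m ≤ G m) (n : ℕ) {x : M} (hx : x ∈ iSup D) (hxn : x ∈ G n) : x ∈ D n := by
  rw [Submodule.mem_iSup_iff_exists_dfinsupp] at hx
  obtain ⟨f, hf⟩ := hx
  classical
  set g : Π₀ m, G m := DFinsupp.mapRange (fun m (y : D m) => (⟨(y : M), hDG m y.2⟩ : G m))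
    (fun m => rfl) f with hg
  have hgsum : DFinsupp.lsum ℕ (M := fun n ↦ ↥(G n)) (fun m => (G m).subtype) g = x := by
    rw [← hf]
    simp only [DFinsupp.lsum_apply_apply, DFinsupp.sumAddHom_apply]
    rw [hg, DFinsupp.sum_mapRange_index (by simp)]
    rfl
  have h2 : DFinsupp.lsum ℕ (M := fun n ↦ ↥(G n)) (fun m => (G m).subtype)
      (DFinsupp.single n ⟨x, hxn⟩) = x := by simp
  have := hG.dfinsupp_lsum_injective (p := G) (hgsum.trans h2.symm)
  have hfn : ((f n : M)) = x := by
    have := congrArg (fun h => ((h n : G n) : M)) this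
    simpa [hg] using this
  -- and all other components are zero, so x = f n ∈ D n
  rw [← hfn]
  exact (f n).2

end Helpers



section Helpers
variable {k : Type u} [Field k] {M : Type u} [AddCommGroup M] [Module k M]

lemma inf_iSup_graded {G D E : ℕ → Submodule k M} (hG : iSupIndep G)
    (hDG : ∀ m, D m ≤ G m) (hEG : ∀ m, E m ≤ G m) {x : M}
    (hxD : x ∈ iSup D) (hxE : x ∈ iSup E) : x ∈ ⨆ n, (D n ⊓ E n) := by
  rw [Submodule.mem_iSup_iff_exists_dfinsupp] at hxD hxE
  obtain ⟨f, hf⟩ := hxD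
  obtain ⟨g, hg⟩ := hxE
  classical
  set f' : Π₀ m, G m := DFinsupp.mapRange (fun m (y : D m) => (⟨(y : M), hDG m y.2⟩ : G m))
    (fun m => rfl) f with hf'
  set g' : Π₀ m, G m := DFinsupp.mapRange (fun m (y : E m) => (⟨(y : M), hEG m y.2⟩ : G m))
    (fun m => rfl) g with hg'
  have hfs : DFinsupp.lsum ℕ (M := fun n ↦ ↥(G n)) (fun m => (G m).subtype) f' = x := by
    rw [← hf]
    simp only [DFinsupp.lsum_apply_apply, DFinsupp.sumAddHom_apply]
    rw [hf', DFinsupp.sum_mapRange_index (by simp)]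
    rfl
  have hgs : DFinsupp.lsum ℕ (M := fun n ↦ ↥(G n)) (fun m => (G m).subtype) g' = x := by
    rw [← hg]
    simp only [DFinsupp.lsum_apply_apply, DFinsupp.sumAddHom_apply]
    rw [hg', DFinsupp.sum_mapRange_index (by simp)]
    rfl
  have hfg : f' = g' := hG.dfinsupp_lsum_injective (p := G) (hfs.trans hgs.symm)
  have key : ∀ m, ((f m : M)) ∈ D m ⊓ E m := by
    intro m
    refine ⟨(f m).2, ?_⟩
    have : ((f' m : M)) = ((g' m : M)) := by rw [hfg]
    have h1 : ((f' m : M)) = ((f m : M)) := rfl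
    have h2 : ((g' m : M)) = ((g m : M)) := rfl
    rw [h1, h2] at this
    rw [this]; exact (g m).2
  -- x = sum of f components, each in D ⊓ E
  rw [← hf]
  simp only [DFinsupp.lsum_apply_apply, DFinsupp.sumAddHom_apply]
  exact Submodule.dfinsuppSum_mem _ _ _ (fun m _ => Submodule.mem_iSup_of_mem m (key m))

/-- graded kernel decomposition: if `x ∈ ⨆ D` and a linear map `π` kills `x`, with `π (D n) ⊆ G n`
for an independent family `G` in the target, then `x` lies in the sup of `D n ⊓ ker π`. -/
lemma ker_iSup_graded {N : Type u} [AddCommGroup N] [Module k N]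
    {D : ℕ → Submodule k M} {G : ℕ → Submodule k N} (hG : iSupIndep G)
    (π : M →ₗ[k] N) (hDG : ∀ m, D m ≤ Submodule.comap π (G m)) {x : M}
    (hx : x ∈ iSup D) (hx0 : π x = 0) : x ∈ ⨆ n, (D n ⊓ LinearMap.ker π) := by
  rw [Submodule.mem_iSup_iff_exists_dfinsupp] at hx
  obtain ⟨f, hf⟩ := hx
  classical
  set g : Π₀ m, G m := DFinsupp.mapRange (fun m (y : D m) => (⟨π (y : M), hDG m y.2⟩ : G m))
    (fun m => by simp) f with hg
  have hgs : DFinsupp.lsum ℕ (M := fun n ↦ ↥(G n)) (fun m => (G m).subtype) g = 0 := by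
    rw [← hx0, ← hf]
    simp only [DFinsupp.lsum_apply_apply, DFinsupp.sumAddHom_apply]
    rw [hg, DFinsupp.sum_mapRange_index (by simp)]
    rw [map_dfinsuppSum]
    rfl
  have hg0 : g = 0 := hG.dfinsupp_lsum_injective (p := G) (by simpa using hgs)
  have key : ∀ m, ((f m : M)) ∈ D m ⊓ LinearMap.ker π := by
    intro m
    refine ⟨(f m).2, ?_⟩
    have : ((g m : N)) = 0 := by rw [hg0]; rfl
    simpa [hg] using this
  rw [← hf]
  simp only [DFinsupp.lsum_apply_apply, DFinsupp.sumAddHom_apply]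
  exact Submodule.dfinsuppSum_mem _ _ _ (fun m _ => Submodule.mem_iSup_of_mem m (key m))

end Helpers



section LieHelpers
variable {k : Type u} [Field k] {F : Type u} [LieRing F] [LieAlgebra k F]

lemma bracket_iSup_mem {ι₁ ι₂ : Type*} {Q : ι₁ → Submodule k F} {Q' : ι₂ → Submodule k F}
    {T : Submodule k F} (h : ∀ i j, ∀ a ∈ Q i, ∀ b ∈ Q' j, ⁅a, b⁆ ∈ T)
    {z w : F} (hz : z ∈ iSup Q) (hw : w ∈ iSup Q') : ⁅z, w⁆ ∈ T := by
  refine Submodule.iSup_induction (motive := fun z => ⁅z, w⁆ ∈ T) Q hz ?_ (by simp) ?_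
  · intro i a ha
    refine Submodule.iSup_induction (motive := fun w => ⁅a, w⁆ ∈ T) Q' hw ?_ (by simp) ?_
    · intro j b hb; exact h i j a ha b hb
    · intro b c hb hc; rw [lie_add]; exact T.add_mem hb hc
  · intro a b ha hb; rw [add_lie]; exact T.add_mem ha hb

variable {L' : Type u} [LieRing L'] [LieAlgebra k L']

/-- The `(R∩[F,F])/[R,F]` "renormalization" lemma: an endomorphism over `π` acts as the identity
on `[F,F]` modulo `[ker π, F]`. -/
lemma alpha_sub_mem (π : F →ₗ⁅k⁆ L') (α : F →ₗ⁅k⁆ F) (hα : ∀ x, π (α x) = π x) {r : F}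
    (hr : r ∈ ((⁅(⊤ : LieIdeal k F), (⊤ : LieIdeal k F)⁆ : LieIdeal k F) : Submodule k F)) :
    α r - r ∈ ((⁅π.ker, (⊤ : LieIdeal k F)⁆ : LieIdeal k F) : Submodule k F) := by
  rw [LieIdeal.toLieSubalgebra_toSubmodule, LieSubmodule.lieIdeal_oper_eq_linear_span'] at hr ⊢
  set T := Submodule.span k {m | ∃ x ∈ π.ker, ∃ n ∈ (⊤ : LieIdeal k F), ⁅x, n⁆ = m} with hT
  refine Submodule.span_induction (p := fun m _ => α m - m ∈ T) ?_ (by simp) ?_ ?_ hr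
  · rintro m ⟨x, -, y, -, rfl⟩
    have key : α ⁅x, y⁆ - ⁅x, y⁆ = ⁅α x - x, α y⁆ + ⁅x, α y - y⁆ := by
      rw [LieHom.map_lie]
      rw [sub_lie, lie_sub]
      abel
    rw [key]
    have h1 : α x - x ∈ π.ker := by
      rw [LieHom.mem_ker, map_sub, hα, sub_self]
    have h2 : α y - y ∈ π.ker := by
      rw [LieHom.mem_ker, map_sub, hα, sub_self]
    refine T.add_mem ?_ ?_
    · exact Submodule.subset_span ⟨α x - x, h1, α y, trivial, rfl⟩
    · have : ⁅x, α y - y⁆ = -⁅α y - y, x⁆ := by rw [lie_skew]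
      rw [this]
      exact T.neg_mem (Submodule.subset_span ⟨α y - y, h2, x, trivial, rfl⟩)
  · intro a b _ _ ha hb
    have : α (a + b) - (a + b) = (α a - a) + (α b - b) := by rw [map_add]; abel
    rw [this]; exact T.add_mem ha hb
  · intro c a _ ha
    have : α (c • a) - c • a = c • (α a - a) := by rw [map_smul, smul_sub]
    rw [this]; exact T.smul_mem c ha

/-- Lie algebra homomorphisms map `[I, ⊤]` (as spans) into `[I', ⊤]` whenever `φ I ⊆ I'`. -/
lemma map_bracket_span {F₂ : Type u} [LieRing F₂] [LieAlgebra k F₂] (φ : F →ₗ⁅k⁆ F₂)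
    (I : LieIdeal k F) (I' : LieIdeal k F₂) (h : ∀ a ∈ I, φ a ∈ I') {r : F}
    (hr : r ∈ ((⁅I, (⊤ : LieIdeal k F)⁆ : LieIdeal k F) : Submodule k F)) :
    φ r ∈ ((⁅I', (⊤ : LieIdeal k F₂)⁆ : LieIdeal k F₂) : Submodule k F₂) := by
  rw [LieIdeal.toLieSubalgebra_toSubmodule, LieSubmodule.lieIdeal_oper_eq_linear_span'] at hr ⊢
  refine Submodule.span_induction
    (p := fun m _ => φ m ∈ Submodule.span k {m | ∃ x ∈ I', ∃ n ∈ (⊤ : LieIdeal k F₂), ⁅x, n⁆ = m})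
    ?_ (by simp) ?_ ?_ hr
  · rintro m ⟨x, hx, y, -, rfl⟩
    rw [LieHom.map_lie]
    exact Submodule.subset_span ⟨φ x, h x hx, φ y, trivial, rfl⟩
  · intro a b _ _ ha hb; rw [map_add]; exact Submodule.add_mem _ ha hb
  · intro c a _ ha; rw [map_smul]; exact Submodule.smul_mem _ c ha

/-- A submodule of a free Lie algebra containing the generators and closed under brackets
is everything. -/
lemma FreeLie.submodule_eq_top {X : Type u} (P : Submodule k (FreeLieAlgebra k X))
    (h1 : ∀ x, FreeLieAlgebra.of k x ∈ P) (h2 : ∀ a ∈ P, ∀ b ∈ P, ⁅a, b⁆ ∈ P) : P = ⊤ := by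
  let K : LieSubalgebra k (FreeLieAlgebra k X) :=
    { P with lie_mem' := fun {a b} ha hb => h2 a ha b hb }
  have hK : LieSubalgebra.lieSpan k (FreeLieAlgebra k X) (Set.range (FreeLieAlgebra.of k)) ≤ K := by
    rw [LieSubalgebra.lieSpan_le]
    rintro - ⟨x, rfl⟩
    exact h1 x
  suffices htop : LieSubalgebra.lieSpan k (FreeLieAlgebra k X)
      (Set.range (FreeLieAlgebra.of k)) = ⊤ by
    rw [eq_top_iff]
    intro z _
    exact hK (htop ▸ LieSubalgebra.mem_top z : z ∈ _)
  -- lieSpan of the generators is all of the free Lie algebra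
  set S := LieSubalgebra.lieSpan k (FreeLieAlgebra k X) (Set.range (FreeLieAlgebra.of k)) with hS
  let τ : FreeLieAlgebra k X →ₗ⁅k⁆ S :=
    FreeLieAlgebra.lift k fun x =>
      ⟨FreeLieAlgebra.of k x, LieSubalgebra.subset_lieSpan (Set.mem_range_self x)⟩
  have hτ : S.incl.comp τ = LieHom.id := by
    apply FreeLieAlgebra.hom_ext
    intro x
    simp [τ, FreeLieAlgebra.lift_of_apply]
  rw [eq_top_iff]
  intro z _
  have : S.incl (τ z) = z := by
    have := LieHom.congr_fun hτ z
    simpa using this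
  rw [← this]
  exact (τ z).2

end LieHelpers




section FreeGrading

variable {k : Type u} [Field k] {X : Type u} (d : X → ℕ)

noncomputable instance tensorLieAlgebraK (F : Type u) [LieRing F] [LieAlgebra k F] :
    LieAlgebra k (Polynomial k ⊗[k] F) :=
  { (inferInstance : Module k (Polynomial k ⊗[k] F)) with
    lie_smul := fun c x y => by
      have h := lie_smul (algebraMap k (Polynomial k) c) x y
      rw [algebraMap_smul, algebraMap_smul] at h
      exact h }

/-- The "comultiplication-like" map recording the grading of a free Lie algebra with generator
`x` of degree `d x`. -/
noncomputable def theta : FreeLieAlgebra k X →ₗ⁅k⁆ Polynomial k ⊗[k] FreeLieAlgebra k X :=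
  lift k fun x => (Polynomial.X ^ d x : Polynomial k) ⊗ₜ of k x

/-- The degree-`n` component of the free Lie algebra (with a junk value in degree 0 replaced
by `⊥` in `fdeg₁`). -/
noncomputable def fdeg (n : ℕ) : Submodule k (FreeLieAlgebra k X) :=
  LinearMap.eqLocus (theta (k := k) d).toLinearMap
    ((TensorProduct.mk k (Polynomial k) (FreeLieAlgebra k X)) (Polynomial.X ^ n))

lemma mem_fdeg {n : ℕ} {z : FreeLieAlgebra k X} :
    z ∈ fdeg (k := k) d n ↔ theta (k := k) d z = (Polynomial.X ^ n : Polynomial k) ⊗ₜ z := Iff.rfl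

lemma of_mem_fdeg (x : X) : of k x ∈ fdeg d (d x) := by
  rw [mem_fdeg, theta, lift_of_apply]

lemma bracket_mem_fdeg {i j : ℕ} {z w : FreeLieAlgebra k X}
    (hz : z ∈ fdeg d i) (hw : w ∈ fdeg d j) : ⁅z, w⁆ ∈ fdeg d (i + j) := by
  rw [mem_fdeg] at hz hw ⊢
  rw [LieHom.map_lie, hz, hw, LieAlgebra.ExtendScalars.bracket_tmul, ← pow_add]

/-- Extracting the coefficient of `X^n`. -/
noncomputable def coeffMap (F : Type u) [LieRing F] [LieAlgebra k F] (n : ℕ) :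
    Polynomial k ⊗[k] F →ₗ[k] F :=
  TensorProduct.lift ((LinearMap.lsmul k F).comp (Polynomial.lcoeff k n))

@[simp] lemma coeffMap_tmul (F : Type u) [LieRing F] [LieAlgebra k F] (n : ℕ)
    (p : Polynomial k) (z : F) : coeffMap F n (p ⊗ₜ z) = p.coeff n • z := rfl

lemma indep_fdeg : iSupIndep (fdeg (k := k) d) := by
  classical
  apply iSupIndep_of_dfinsupp_lsum_injective
  rw [← LinearMap.ker_eq_bot, LinearMap.ker_eq_bot']
  intro f hf
  ext n : 1
  have h0 : (theta (k := k) d).toLinearMap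
      (DFinsupp.lsum ℕ (M := fun m ↦ ↥(fdeg (k := k) d m))
        (fun m => (fdeg (k := k) d m).subtype) f) = 0 := by rw [hf]; simp
  have h1 : coeffMap (FreeLieAlgebra k X) n ((theta (k := k) d).toLinearMap
      (DFinsupp.lsum ℕ (M := fun m ↦ ↥(fdeg (k := k) d m))
        (fun m => (fdeg (k := k) d m).subtype) f)) = (f n : FreeLieAlgebra k X) := by
    simp only [DFinsupp.lsum_apply_apply, DFinsupp.sumAddHom_apply]
    rw [map_dfinsuppSum, map_dfinsuppSum]
    have key : ∀ m, ∀ z : fdeg (k := k) d m,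
        coeffMap (FreeLieAlgebra k X) n ((theta (k := k) d).toLinearMap (z : FreeLieAlgebra k X)) =
          if m = n then (z : FreeLieAlgebra k X) else 0 := by
      intro m z
      have hz : theta (k := k) d (z : FreeLieAlgebra k X)
          = (Polynomial.X ^ m : Polynomial k) ⊗ₜ (z : FreeLieAlgebra k X) := z.2
      show coeffMap (FreeLieAlgebra k X) n (theta (k := k) d (z : FreeLieAlgebra k X)) = _
      rw [hz, coeffMap_tmul, Polynomial.coeff_X_pow]
      by_cases h : n = m
      · subst h; simp
      · rw [if_neg h, if_neg (Ne.symm h), zero_smul]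
    rw [DFinsupp.sum]
    refine Eq.trans (Finset.sum_congr rfl (fun m _ => key m (f m))) ?_
    by_cases hn : n ∈ f.support
    · rw [Finset.sum_ite_eq' f.support n (fun m => ((f m : FreeLieAlgebra k X))), if_pos hn]
    · rw [Finset.sum_ite_eq' f.support n (fun m => ((f m : FreeLieAlgebra k X))), if_neg hn]
      simp only [DFinsupp.mem_support_iff, not_not] at hn
      simp [hn]
  rw [h0] at h1
  simp only [map_zero] at h1
  exact Subtype.ext h1.symm

end FreeGrading

section FreeGrading2
variable {k : Type u} [Field k] {X : Type u} (d : X → ℕ)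

noncomputable def fdeg1 (n : ℕ) : Submodule k (FreeLieAlgebra k X) :=
  if n = 0 then ⊥ else fdeg d n

lemma fdeg1_le (n : ℕ) : fdeg1 (k := k) d n ≤ fdeg d n := by
  unfold fdeg1; split
  · exact bot_le
  · exact le_rfl

lemma fdeg1_zero : fdeg1 (k := k) d 0 = ⊥ := if_pos rfl

lemma indep_fdeg1 : iSupIndep (fdeg1 (k := k) d) := (indep_fdeg d).mono (fdeg1_le d)

lemma of_mem_fdeg1 (hd : ∀ x, 1 ≤ d x) (x : X) : of k x ∈ fdeg1 d (d x) := by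
  rw [fdeg1, if_neg (Nat.one_le_iff_ne_zero.mp (hd x))]
  exact of_mem_fdeg d x

lemma bracket_mem_fdeg1 {i j : ℕ} {z w : FreeLieAlgebra k X}
    (hz : z ∈ fdeg1 d i) (hw : w ∈ fdeg1 d j) : ⁅z, w⁆ ∈ fdeg1 d (i + j) := by
  rcases Nat.eq_zero_or_pos i with hi | hi
  · subst hi
    rw [fdeg1_zero] at hz
    rw [Submodule.mem_bot] at hz
    subst hz; simp
  rcases Nat.eq_zero_or_pos j with hj | hj
  · subst hj
    rw [fdeg1_zero] at hw
    rw [Submodule.mem_bot] at hw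
    subst hw; simp
  have h0 : i + j ≠ 0 := by omega
  rw [fdeg1, if_neg h0]
  exact bracket_mem_fdeg d ((fdeg1_le d i) hz) ((fdeg1_le d j) hw)

lemma iSup_fdeg1_eq_top (hd : ∀ x, 1 ≤ d x) :
    (⨆ n, fdeg1 (k := k) d n) = ⊤ := by
  apply FreeLie.submodule_eq_top
  · intro x
    exact Submodule.mem_iSup_of_mem (d x) (of_mem_fdeg1 d hd x)
  · intro a ha b hb
    exact bracket_iSup_mem
      (fun i j a ha b hb =>
        Submodule.mem_iSup_of_mem (i + j) (bracket_mem_fdeg1 d ha hb)) ha hb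

/-- The degree-respecting property of the lift of a degree-respecting generator assignment. -/
lemma lift_graded_mem {L : Type u} [LieRing L] [LieAlgebra k L] (gr : LieGrading k L)
    (val : X → L) (hval : ∀ x, val x ∈ gr.G (d x)) (hd : ∀ x, 1 ≤ d x)
    {n : ℕ} {z : FreeLieAlgebra k X} (hz : z ∈ fdeg1 d n) :
    FreeLieAlgebra.lift k val z ∈ gr.G n := by
  set π := FreeLieAlgebra.lift k val with hπ
  set D : ℕ → Submodule k (FreeLieAlgebra k X) :=
    fun m => fdeg1 d m ⊓ Submodule.comap (π : FreeLieAlgebra k X →ₗ[k] L) (gr.G m) with hD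
  have hP : (⨆ m, D m) = ⊤ := by
    apply FreeLie.submodule_eq_top
    · intro x
      refine Submodule.mem_iSup_of_mem (d x) ⟨of_mem_fdeg1 d hd x, ?_⟩
      have h1 : π (of k x) = val x := lift_of_apply val x
      show π (of k x) ∈ gr.G (d x)
      rw [h1]
      exact hval x
    · intro a ha b hb
      refine bracket_iSup_mem (fun i j a ha b hb => Submodule.mem_iSup_of_mem (i + j) ?_) ha hb
      refine ⟨bracket_mem_fdeg1 d ha.1 hb.1, ?_⟩
      show π ⁅a, b⁆ ∈ gr.G (i + j)
      rw [LieHom.map_lie]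
      exact gr.bracket_mem i j _ _ ha.2 hb.2
  have hmem : z ∈ ⨆ m, D m := hP ▸ Submodule.mem_top
  have := mem_of_iSup_graded (indep_fdeg1 d) (fun m => inf_le_left) n hmem hz
  exact this.2

end FreeGrading2
section Construction
variable {k : Type u} [Field k] {L : Type u} [LieRing L] [LieAlgebra k L] (gr : LieGrading k L)

noncomputable def CL (i j : ℕ) : Submodule k L :=
  Submodule.span k {m | ∃ x ∈ gr.G i, ∃ y ∈ gr.G j, ⁅x, y⁆ = m}

lemma CL_le (i j : ℕ) : CL gr i j ≤ gr.G (i + j) := by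
  rw [CL, Submodule.span_le]
  rintro m ⟨x, hx, y, hy, rfl⟩
  exact gr.bracket_mem i j x y hx hy

noncomputable def DL (n : ℕ) : Submodule k L :=
  ⨆ p : ℕ × ℕ, ⨆ (_ : p.1 + p.2 = n), CL gr p.1 p.2

lemma CL_le_DL {i j n : ℕ} (h : i + j = n) : CL gr i j ≤ DL gr n := by
  have h1 : CL gr i j ≤ ⨆ (_ : (i, j).1 + (i, j).2 = n), CL gr (i, j).1 (i, j).2 :=
    le_iSup (fun _ : (i, j).1 + (i, j).2 = n => CL gr (i, j).1 (i, j).2) h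
  exact le_trans h1 (le_iSup (fun p : ℕ × ℕ => ⨆ (_ : p.1 + p.2 = n), CL gr p.1 p.2) (i, j))

lemma DL_le (n : ℕ) : DL gr n ≤ gr.G n := by
  refine iSup_le fun p => iSup_le fun hp => ?_
  rw [← hp]
  exact CL_le gr p.1 p.2

lemma derived_le_iSup_DL :
    ((⁅(⊤ : LieIdeal k L), (⊤ : LieIdeal k L)⁆ : LieIdeal k L) : Submodule k L) ≤
      ⨆ n, DL gr n := by
  rw [LieIdeal.toLieSubalgebra_toSubmodule, LieSubmodule.lieIdeal_oper_eq_linear_span',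
    Submodule.span_le]
  rintro m ⟨x, -, y, -, rfl⟩
  have hx : x ∈ iSup gr.G := gr.iSup_eq_top ▸ Submodule.mem_top
  have hy : y ∈ iSup gr.G := gr.iSup_eq_top ▸ Submodule.mem_top
  exact bracket_iSup_mem (fun i j a ha b hb => Submodule.mem_iSup_of_mem (i + j)
    (CL_le_DL gr rfl (Submodule.subset_span ⟨a, ha, b, hb, rfl⟩))) hx hy

noncomputable def Vsub (n : ℕ) : Submodule k L :=
  (Classical.choose (Submodule.exists_isCompl ((DL gr n).comap (gr.G n).subtype))).map
    (gr.G n).subtype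

lemma Vsub_le (n : ℕ) : Vsub gr n ≤ gr.G n := by
  rw [Vsub]
  exact Submodule.map_subtype_le _ _

lemma Vsub_inf (n : ℕ) : Vsub gr n ⊓ DL gr n = ⊥ := by
  have hC := Classical.choose_spec (Submodule.exists_isCompl ((DL gr n).comap (gr.G n).subtype))
  rw [eq_bot_iff]
  intro x hx
  rw [Submodule.mem_inf] at hx
  obtain ⟨hxV, hxD⟩ := hx
  rw [Vsub, Submodule.mem_map] at hxV
  obtain ⟨y, hy, rfl⟩ := hxV
  have : y ∈ (DL gr n).comap (gr.G n).subtype := hxD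
  have h0 : y ∈ ((DL gr n).comap (gr.G n).subtype) ⊓ _ := ⟨this, hy⟩
  rw [hC.inf_eq_bot, Submodule.mem_bot] at h0
  rw [h0]
  simp

lemma Vsub_sup (n : ℕ) : gr.G n ≤ Vsub gr n ⊔ DL gr n := by
  have hC := Classical.choose_spec (Submodule.exists_isCompl ((DL gr n).comap (gr.G n).subtype))
  intro x hx
  have : (⟨x, hx⟩ : ↥(gr.G n)) ∈ ((DL gr n).comap (gr.G n).subtype) ⊔
      Classical.choose (Submodule.exists_isCompl ((DL gr n).comap (gr.G n).subtype)) := by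
    rw [hC.sup_eq_top]; trivial
  rw [Submodule.mem_sup] at this
  obtain ⟨y, hy, z, hz, hyz⟩ := this
  rw [Submodule.mem_sup]
  refine ⟨(z : L), ?_, (y : L), hy, ?_⟩
  · rw [Vsub, Submodule.mem_map]
    exact ⟨z, hz, rfl⟩
  · have := congrArg (fun w : ↥(gr.G n) => (w : L)) hyz
    simp only [Submodule.coe_add] at this
    rw [← this, add_comm]

noncomputable def bX (n : ℕ) : Set ↥(Vsub gr n) := Module.Basis.ofVectorSpaceIndex k ↥(Vsub gr n)

def XT : Type u := (n : ℕ) × ↥(bX gr (n + 1))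

noncomputable def valX : XT gr → L := fun x => ((x.2 : ↥(Vsub gr (x.1 + 1))) : L)

def degX : XT gr → ℕ := fun x => x.1 + 1

lemma degX_pos (x : XT gr) : 1 ≤ degX gr x := Nat.le_add_left 1 x.1

lemma valX_mem (x : XT gr) : valX gr x ∈ gr.G (degX gr x) :=
  Vsub_le gr (x.1 + 1) (x.2 : ↥(Vsub gr (x.1 + 1))).2

lemma valX_mem_V (x : XT gr) : valX gr x ∈ Vsub gr (degX gr x) :=
  (x.2 : ↥(Vsub gr (x.1 + 1))).2

lemma span_valX (n : ℕ) :
    Submodule.span k (Set.range fun y : ↥(bX gr (n + 1)) =>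
      ((y : ↥(Vsub gr (n + 1))) : L)) = Vsub gr (n + 1) := by
  have h1 : (Set.range fun y : ↥(bX gr (n + 1)) => ((y : ↥(Vsub gr (n + 1))) : L)) =
      (Vsub gr (n + 1)).subtype '' (Set.range ((↑) : ↥(bX gr (n + 1)) → ↥(Vsub gr (n + 1)))) := by
    rw [← Set.range_comp]; rfl
  rw [h1, Submodule.span_image]
  have h2 : (Set.range ((↑) : ↥(bX gr (n + 1)) → ↥(Vsub gr (n + 1)))) = bX gr (n + 1) :=
    Subtype.range_coe
  rw [h2]
  have h3 : Submodule.span k (bX gr (n + 1)) = (⊤ : Submodule k ↥(Vsub gr (n + 1))) := by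
    have := (Module.Basis.ofVectorSpace k ↥(Vsub gr (n + 1))).span_eq
    rwa [Module.Basis.coe_ofVectorSpace, Subtype.range_coe] at this
  rw [h3, Submodule.map_subtype_top]

lemma li_valX (n : ℕ) :
    LinearIndependent k fun y : ↥(bX gr (n + 1)) => ((y : ↥(Vsub gr (n + 1))) : L) := by
  have h1 : LinearIndependent k ((↑) : ↥(bX gr (n + 1)) → ↥(Vsub gr (n + 1))) := by
    have := (Module.Basis.ofVectorSpace k ↥(Vsub gr (n + 1))).linearIndependent
    rwa [Module.Basis.coe_ofVectorSpace] at this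
  exact h1.map' (Vsub gr (n + 1)).subtype (Submodule.ker_subtype _)

noncomputable def pi2 : FreeLieAlgebra k (XT gr) →ₗ⁅k⁆ L := FreeLieAlgebra.lift k (valX gr)

lemma pi2_surjective : Function.Surjective (pi2 gr) := by
  have key : ∀ n, ∀ y ∈ gr.G n, y ∈ (pi2 gr).range := by
    intro n
    induction n using Nat.strong_induction_on with
    | _ n IH =>
      intro y hy
      have := Vsub_sup gr n hy
      rw [Submodule.mem_sup] at this
      obtain ⟨v, hv, w, hw, rfl⟩ := this
      refine ((pi2 gr).range : LieSubalgebra k L).add_mem ?_ ?_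
      · -- v ∈ Vsub n
        match n with
        | 0 =>
          have : v ∈ gr.G 0 := Vsub_le gr 0 hv
          rw [gr.zero_eq_bot, Submodule.mem_bot] at this
          rw [this]
          exact ((pi2 gr).range : LieSubalgebra k L).zero_mem
        | (m + 1) =>
          rw [← span_valX gr m] at hv
          have hle : Submodule.span k (Set.range fun y : ↥(bX gr (m + 1)) =>
              ((y : ↥(Vsub gr (m + 1))) : L)) ≤ ((pi2 gr).range : LieSubalgebra k L).toSubmodule := by
            rw [Submodule.span_le]
            rintro - ⟨y, rfl⟩
            refine ⟨of k (⟨m, y⟩ : XT gr), ?_⟩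
            exact lift_of_apply (valX gr) _
          exact hle hv
      · -- w ∈ DL n
        have hle : DL gr n ≤ ((pi2 gr).range : LieSubalgebra k L).toSubmodule := by
          refine iSup_le fun p => iSup_le fun hp => ?_
          rw [CL, Submodule.span_le]
          rintro - ⟨a, ha, b, hb, rfl⟩
          rcases Nat.eq_zero_or_pos p.1 with h1 | h1
          · rw [h1, gr.zero_eq_bot, Submodule.mem_bot] at ha
            rw [ha, zero_lie]
            exact ((pi2 gr).range : LieSubalgebra k L).zero_mem
          rcases Nat.eq_zero_or_pos p.2 with h2 | h2
          · rw [h2, gr.zero_eq_bot, Submodule.mem_bot] at hb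
            rw [hb, lie_zero]
            exact ((pi2 gr).range : LieSubalgebra k L).zero_mem
          have ha' : a ∈ (pi2 gr).range := IH p.1 (by omega) a ha
          have hb' : b ∈ (pi2 gr).range := IH p.2 (by omega) b hb
          exact ((pi2 gr).range : LieSubalgebra k L).lie_mem ha' hb'
        exact hle hw
  intro y
  have hy : y ∈ iSup gr.G := gr.iSup_eq_top ▸ Submodule.mem_top
  have : y ∈ ((pi2 gr).range : LieSubalgebra k L).toSubmodule := by
    refine (iSup_le (fun n => ?_) : iSup gr.G ≤ _) hy
    intro z hz
    exact key n z hz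
  exact this

end Construction
section Seg7
variable {k : Type u} [Field k] {L : Type u} [LieRing L] [LieAlgebra k L] (gr : LieGrading k L)

lemma bracket_mem_derived {F : Type u} [LieRing F] [LieAlgebra k F] (a b : F) :
    ⁅a, b⁆ ∈ ((⁅(⊤ : LieIdeal k F), (⊤ : LieIdeal k F)⁆ : LieIdeal k F) : Submodule k F) := by
  rw [LieIdeal.toLieSubalgebra_toSubmodule, LieSubmodule.lieIdeal_oper_eq_linear_span']
  exact Submodule.subset_span ⟨a, trivial, b, trivial, rfl⟩

lemma pi2_graded {n : ℕ} {z : FreeLieAlgebra k (XT gr)} (hz : z ∈ fdeg1 (degX gr) n) :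
    pi2 gr z ∈ gr.G n :=
  lift_graded_mem (degX gr) gr (valX gr) (valX_mem gr) (degX_pos gr) hz

/-- Graded components of the relation ideal. -/
lemma ker_pi2_graded {r : FreeLieAlgebra k (XT gr)} (hr : r ∈ LinearMap.ker (pi2 gr).toLinearMap) :
    r ∈ ⨆ n, (fdeg1 (degX gr) n ⊓ LinearMap.ker (pi2 gr).toLinearMap) := by
  refine ker_iSup_graded gr.indep (pi2 gr).toLinearMap (fun m => ?_) ?_ hr
  · intro z hz
    exact pi2_graded gr hz
  · rw [iSup_fdeg1_eq_top (degX gr) (degX_pos gr)]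
    trivial

/-- The [sub]algebra of degree-`(m+1)` generators. -/
noncomputable def Un : ℕ → Submodule k (FreeLieAlgebra k (XT gr))
  | 0 => ⊥
  | m + 1 => Submodule.span k (Set.range fun y : ↥(bX gr (m + 1)) => of k (⟨m, y⟩ : XT gr))

lemma Un_inf_ker (n : ℕ) : Un gr n ⊓ LinearMap.ker (pi2 gr).toLinearMap = ⊥ := by
  match n with
  | 0 => rw [Un]; exact bot_inf_eq _
  | m + 1 =>
    rw [eq_bot_iff]
    intro w hw
    rw [Submodule.mem_inf] at hw
    obtain ⟨hw1, hw2⟩ := hw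
    rw [Un, Finsupp.mem_span_range_iff_exists_finsupp] at hw1
    obtain ⟨c, hc⟩ := hw1
    have hpi : (c.sum fun y a => a • valX gr (⟨m, y⟩ : XT gr)) = 0 := by
      have h1 := congrArg (pi2 gr).toLinearMap hc
      rw [map_finsuppSum] at h1
      have h2 : (c.sum fun y a => a • valX gr (⟨m, y⟩ : XT gr))
          = c.sum fun y a => (pi2 gr).toLinearMap (a • of k (⟨m, y⟩ : XT gr)) := by
        apply Finsupp.sum_congr
        intro y _
        erw [LinearMap.map_smul]
        congr 1
        exact (lift_of_apply (valX gr) _).symm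
      refine h2.trans (h1.trans ?_)
      rw [LinearMap.mem_ker] at hw2
      exact hw2
    have hli := li_valX gr m
    rw [linearIndependent_iff] at hli
    have hc0 : c = 0 := by
      apply hli
      rw [Finsupp.linearCombination_apply]
      exact hpi
    rw [hc0, Finsupp.sum_zero_index] at hc
    rw [Submodule.mem_bot]
    exact hc.symm

lemma ker_le_derived :
    (LinearMap.ker (pi2 gr).toLinearMap : Submodule k (FreeLieAlgebra k (XT gr))) ≤
      ((⁅(⊤ : LieIdeal k (FreeLieAlgebra k (XT gr))),
          (⊤ : LieIdeal k (FreeLieAlgebra k (XT gr)))⁆ :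
        LieIdeal k (FreeLieAlgebra k (XT gr))) : Submodule k (FreeLieAlgebra k (XT gr))) := by
  intro r hr
  have hr0 : pi2 gr r = 0 := hr
  set derivedSub : Submodule k (FreeLieAlgebra k (XT gr)) :=
    ((⁅(⊤ : LieIdeal k (FreeLieAlgebra k (XT gr))),
        (⊤ : LieIdeal k (FreeLieAlgebra k (XT gr)))⁆ :
      LieIdeal k (FreeLieAlgebra k (XT gr))) : Submodule k (FreeLieAlgebra k (XT gr))) with hder
  have hsplit : (Submodule.span k (Set.range (of k : XT gr → FreeLieAlgebra k (XT gr)))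
      ⊔ derivedSub) = ⊤ := by
    apply FreeLie.submodule_eq_top
    · intro x
      exact Submodule.mem_sup_left (Submodule.subset_span (Set.mem_range_self x))
    · intro a _ b _
      exact Submodule.mem_sup_right (bracket_mem_derived a b)
  have hrmem : r ∈ Submodule.span k (Set.range (of k : XT gr → FreeLieAlgebra k (XT gr)))
      ⊔ derivedSub := by
    rw [hsplit]; trivial
  rw [Submodule.mem_sup] at hrmem
  obtain ⟨u, hu, c, hc, heq⟩ := hrmem
  -- image of c is in the derived algebra of L
  have hpic : pi2 gr c ∈ ⨆ n, DL gr n := by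
    refine derived_le_iSup_DL gr ?_
    exact map_bracket_span (pi2 gr) ⊤ ⊤ (fun a _ => trivial) hc
  -- image of u is in the complement
  have hpiu : pi2 gr u ∈ ⨆ n, Vsub gr n := by
    have h1 : pi2 gr u ∈ Submodule.map (pi2 gr).toLinearMap
        (Submodule.span k (Set.range (of k : XT gr → FreeLieAlgebra k (XT gr)))) :=
      Submodule.mem_map_of_mem hu
    rw [Submodule.map_span] at h1
    refine Submodule.span_le.mpr ?_ h1
    rintro - ⟨-, ⟨x, rfl⟩, rfl⟩
    have : (pi2 gr).toLinearMap (of k x) = valX gr x := lift_of_apply (valX gr) x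
    rw [this]
    exact Submodule.mem_iSup_of_mem (degX gr x) (valX_mem_V gr x)
  have h0 : pi2 gr u + pi2 gr c = 0 := by
    rw [← map_add, heq]
    exact hr0
  have hneg : pi2 gr u = -pi2 gr c := eq_neg_of_add_eq_zero_left h0
  have hpiu' : pi2 gr u ∈ ⨆ n, DL gr n := by
    rw [hneg]
    exact Submodule.neg_mem _ hpic
  have huz : pi2 gr u = 0 := by
    have := inf_iSup_graded gr.indep (Vsub_le gr) (DL_le gr) hpiu hpiu'
    have hbot : (⨆ n, (Vsub gr n ⊓ DL gr n)) = (⊥ : Submodule k L) := by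
      simp [Vsub_inf gr]
    rw [hbot, Submodule.mem_bot] at this
    exact this
  -- u itself is zero
  have hu0 : u = 0 := by
    have huU : u ∈ ⨆ n, Un gr n := by
      refine Submodule.span_le.mpr ?_ hu
      rintro - ⟨x, rfl⟩
      obtain ⟨m, y⟩ := x
      exact Submodule.mem_iSup_of_mem (m + 1) (Submodule.subset_span (Set.mem_range_self y))
    have hker : u ∈ ⨆ n, (Un gr n ⊓ LinearMap.ker (pi2 gr).toLinearMap) := by
      refine ker_iSup_graded gr.indep (pi2 gr).toLinearMap (fun m => ?_) huU huz
      match m with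
      | 0 => rw [Un]; exact bot_le
      | m + 1 =>
        rw [Un, Submodule.span_le]
        rintro - ⟨y, rfl⟩
        simp only [SetLike.mem_coe, Submodule.mem_comap]
        show pi2 gr (of k (⟨m, y⟩ : XT gr)) ∈ gr.G (m + 1)
        have hofy : pi2 gr (of k (⟨m, y⟩ : XT gr)) = valX gr ⟨m, y⟩ :=
          lift_of_apply (valX gr) _
        rw [hofy]
        exact Vsub_le gr (m + 1) (valX_mem_V gr ⟨m, y⟩)
    have hbot : (⨆ n, (Un gr n ⊓ LinearMap.ker (pi2 gr).toLinearMap))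
        = (⊥ : Submodule k (FreeLieAlgebra k (XT gr))) := by
      simp [Un_inf_ker gr]
    rw [hbot, Submodule.mem_bot] at hker
    exact hker
  rw [← heq, hu0, zero_add]
  exact hc

end Seg7

section Seg8
variable {k : Type u} [Field k] {L : Type u} [LieRing L] [LieAlgebra k L] (gr : LieGrading k L)

lemma ker_pi2_eq_bot
    (hstep : (LinearMap.ker (pi2 gr).toLinearMap : Submodule k (FreeLieAlgebra k (XT gr))) ≤
      ((⁅(pi2 gr).ker, (⊤ : LieIdeal k (FreeLieAlgebra k (XT gr)))⁆ :
          LieIdeal k (FreeLieAlgebra k (XT gr))) : Submodule k (FreeLieAlgebra k (XT gr)))) :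
    LinearMap.ker (pi2 gr).toLinearMap = ⊥ := by
  classical
  set Rn : ℕ → Submodule k (FreeLieAlgebra k (XT gr)) :=
    fun n => fdeg1 (degX gr) n ⊓ LinearMap.ker (pi2 gr).toLinearMap with hRn
  set Cn : ℕ → ℕ → Submodule k (FreeLieAlgebra k (XT gr)) := fun i j =>
    Submodule.span k {m | ∃ a ∈ Rn i, ∃ b ∈ fdeg1 (degX gr) j, ⁅a, b⁆ = m} with hCn
  set En : ℕ → Submodule k (FreeLieAlgebra k (XT gr)) :=
    fun m => ⨆ p : ℕ × ℕ, ⨆ (_ : p.1 + p.2 = m), Cn p.1 p.2 with hEn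
  have hCn_le : ∀ i j, Cn i j ≤ fdeg1 (degX gr) (i + j) := by
    intro i j
    rw [hCn, Submodule.span_le]
    rintro - ⟨a, ha, b, hb, rfl⟩
    exact bracket_mem_fdeg1 (degX gr) ha.1 hb
  have hCn_le_En : ∀ {i j m : ℕ}, i + j = m → Cn i j ≤ En m := by
    intro i j m hm
    rw [hEn]
    have h1 : Cn i j ≤ ⨆ (_ : (i, j).1 + (i, j).2 = m), Cn (i, j).1 (i, j).2 :=
      le_iSup (fun _ : (i, j).1 + (i, j).2 = m => Cn (i, j).1 (i, j).2) hm
    exact le_trans h1 (le_iSup (fun p : ℕ × ℕ => ⨆ (_ : p.1 + p.2 = m), Cn p.1 p.2) (i, j))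
  have hEn_le : ∀ m, En m ≤ fdeg1 (degX gr) m := by
    intro m
    refine iSup_le fun p => iSup_le fun hp => ?_
    rw [← hp]
    exact hCn_le p.1 p.2
  have hbr : ((⁅(pi2 gr).ker, (⊤ : LieIdeal k (FreeLieAlgebra k (XT gr)))⁆ :
      LieIdeal k (FreeLieAlgebra k (XT gr))) : Submodule k (FreeLieAlgebra k (XT gr))) ≤
      ⨆ m, En m := by
    rw [LieIdeal.toLieSubalgebra_toSubmodule, LieSubmodule.lieIdeal_oper_eq_linear_span',
      Submodule.span_le]
    rintro - ⟨x, hx, y, -, rfl⟩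
    have hx' : x ∈ ⨆ n, Rn n := by
      rw [hRn]
      exact ker_pi2_graded gr ((LieHom.mem_ker).mp hx)
    have hy' : y ∈ ⨆ n, fdeg1 (degX gr) n := by
      rw [iSup_fdeg1_eq_top (degX gr) (degX_pos gr)]
      trivial
    exact bracket_iSup_mem (fun i j a ha b hb =>
      Submodule.mem_iSup_of_mem (i + j)
        (hCn_le_En rfl (Submodule.subset_span ⟨a, ha, b, hb, rfl⟩))) hx' hy'
  have hRn_bot : ∀ n, Rn n = ⊥ := by
    intro n
    induction n using Nat.strong_induction_on with
    | _ n IH =>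
      rw [eq_bot_iff]
      intro x hx
      have hx1 : x ∈ fdeg1 (degX gr) n := hx.1
      have hx2 : x ∈ ⨆ m, En m := hbr (hstep hx.2)
      have hx3 : x ∈ En n := mem_of_iSup_graded (indep_fdeg1 (degX gr)) hEn_le n hx2 hx1
      have hEnbot : En n ≤ ⊥ := by
        rw [hEn]
        refine iSup_le fun p => iSup_le fun hp => ?_
        rw [hCn, Submodule.span_le]
        rintro - ⟨a, ha, b, hb, rfl⟩
        simp only [SetLike.mem_coe, Submodule.mem_bot]
        rcases Nat.eq_zero_or_pos p.2 with h2 | h2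
        · rw [h2, fdeg1_zero, Submodule.mem_bot] at hb
          rw [hb, lie_zero]
        · have hip : p.1 < n := by omega
          rw [IH p.1 hip, Submodule.mem_bot] at ha
          rw [ha, zero_lie]
      exact hEnbot hx3
  rw [eq_bot_iff]
  intro x hx
  have hmem : x ∈ ⨆ n, Rn n := ker_pi2_graded gr hx
  have hbot : (⨆ n, Rn n) = (⊥ : Submodule k (FreeLieAlgebra k (XT gr))) := by
    simp [hRn_bot]
  rw [hbot] at hmem
  exact hmem

end Seg8

section Seg9
variable {k : Type u} [Field k] {L : Type u} [LieRing L] [LieAlgebra k L]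

lemma canPres_of (a : L) : canPres k L (FreeLieAlgebra.of k a) = a :=
  lift_of_apply id a

lemma hopf_extract (h : Subsingleton (hopfH2 k L)) :
    ∀ r : FreeLieAlgebra k L,
      r ∈ (canRel k L : Submodule k (FreeLieAlgebra k L)) →
      r ∈ ((⁅(⊤ : LieIdeal k (FreeLieAlgebra k L)), (⊤ : LieIdeal k (FreeLieAlgebra k L))⁆ :
        LieIdeal k (FreeLieAlgebra k L)) : Submodule k (FreeLieAlgebra k L)) →
      r ∈ ((⁅canRel k L, (⊤ : LieIdeal k (FreeLieAlgebra k L))⁆ :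
        LieIdeal k (FreeLieAlgebra k L)) : Submodule k (FreeLieAlgebra k L)) := by
  intro r h1 h2
  have h' : Subsingleton
      (↥((canRel k L : Submodule k (FreeLieAlgebra k L)) ⊓
        ((⁅(⊤ : LieIdeal k (FreeLieAlgebra k L)), (⊤ : LieIdeal k (FreeLieAlgebra k L))⁆ :
          LieIdeal k (FreeLieAlgebra k L)) : Submodule k (FreeLieAlgebra k L))) ⧸
      (Submodule.comap
        ((canRel k L : Submodule k (FreeLieAlgebra k L)) ⊓
          ((⁅(⊤ : LieIdeal k (FreeLieAlgebra k L)), (⊤ : LieIdeal k (FreeLieAlgebra k L))⁆ :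
            LieIdeal k (FreeLieAlgebra k L)) : Submodule k (FreeLieAlgebra k L))).subtype
        ((⁅canRel k L, (⊤ : LieIdeal k (FreeLieAlgebra k L))⁆ :
          LieIdeal k (FreeLieAlgebra k L)) : Submodule k (FreeLieAlgebra k L)))) := h
  rw [Submodule.Quotient.subsingleton_iff] at h'
  have hx : (⟨r, Submodule.mem_inf.mpr ⟨h1, h2⟩⟩ :
      ↥((canRel k L : Submodule k (FreeLieAlgebra k L)) ⊓
        ((⁅(⊤ : LieIdeal k (FreeLieAlgebra k L)), (⊤ : LieIdeal k (FreeLieAlgebra k L))⁆ :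
          LieIdeal k (FreeLieAlgebra k L)) : Submodule k (FreeLieAlgebra k L)))) ∈
      (⊤ : Submodule k _) := trivial
  rw [← h', Submodule.mem_comap] at hx
  exact hx

/-- Direction 1: a free Lie algebra has vanishing `H₂`. -/
lemma dir1 (X : Type u) (e : FreeLieAlgebra k X ≃ₗ⁅k⁆ L) : Subsingleton (hopfH2 k L) := by
  set σ : FreeLieAlgebra k X →ₗ⁅k⁆ FreeLieAlgebra k L :=
    FreeLieAlgebra.lift k (fun x => FreeLieAlgebra.of k (e (FreeLieAlgebra.of k x))) with hσ
  set s : L →ₗ⁅k⁆ FreeLieAlgebra k L := σ.comp (e.symm : L →ₗ⁅k⁆ FreeLieAlgebra k X) with hs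
  have hcomp : (canPres k L).comp σ = (e : FreeLieAlgebra k X →ₗ⁅k⁆ L) := by
    apply FreeLieAlgebra.hom_ext
    intro x
    show canPres k L (σ (FreeLieAlgebra.of k x)) = e (FreeLieAlgebra.of k x)
    rw [hσ, lift_of_apply]
    exact canPres_of _
  have hsec : ∀ a : L, canPres k L (s a) = a := by
    intro a
    have h1 : canPres k L (σ (e.symm a)) = e (e.symm a) := LieHom.congr_fun hcomp (e.symm a)
    rw [hs]
    show canPres k L (σ (e.symm a)) = a
    rw [h1]
    exact e.apply_symm_apply a
  show Subsingleton
      (↥((canRel k L : Submodule k (FreeLieAlgebra k L)) ⊓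
        ((⁅(⊤ : LieIdeal k (FreeLieAlgebra k L)), (⊤ : LieIdeal k (FreeLieAlgebra k L))⁆ :
          LieIdeal k (FreeLieAlgebra k L)) : Submodule k (FreeLieAlgebra k L))) ⧸
      (Submodule.comap
        ((canRel k L : Submodule k (FreeLieAlgebra k L)) ⊓
          ((⁅(⊤ : LieIdeal k (FreeLieAlgebra k L)), (⊤ : LieIdeal k (FreeLieAlgebra k L))⁆ :
            LieIdeal k (FreeLieAlgebra k L)) : Submodule k (FreeLieAlgebra k L))).subtype
        ((⁅canRel k L, (⊤ : LieIdeal k (FreeLieAlgebra k L))⁆ :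
          LieIdeal k (FreeLieAlgebra k L)) : Submodule k (FreeLieAlgebra k L))))
  rw [Submodule.Quotient.subsingleton_iff, Submodule.eq_top_iff']
  intro x
  rw [Submodule.mem_comap]
  obtain ⟨hx1, hx2⟩ := Submodule.mem_inf.mp x.2
  have halpha := alpha_sub_mem (canPres k L) (s.comp (canPres k L))
    (fun z => hsec (canPres k L z)) hx2
  have hx0 : canPres k L (x : FreeLieAlgebra k L) = 0 := by
    have : (x : FreeLieAlgebra k L) ∈ canRel k L := hx1
    exact (LieHom.mem_ker).mp this
  have hzero : (s.comp (canPres k L)) (x : FreeLieAlgebra k L) = 0 := by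
    rw [LieHom.comp_apply, hx0]
    exact s.map_zero
  rw [hzero, zero_sub] at halpha
  have hneg := Submodule.neg_mem _ halpha
  rw [neg_neg] at hneg
  exact hneg

/-- Direction 2. -/
lemma dir2 (gr : LieGrading k L) (h : Subsingleton (hopfH2 k L)) :
    ∃ X : Type u, Nonempty (FreeLieAlgebra k X ≃ₗ⁅k⁆ L) := by
  have hH2 := hopf_extract h
  -- the comparison homomorphisms
  set ψ : FreeLieAlgebra k (XT gr) →ₗ⁅k⁆ FreeLieAlgebra k L :=
    FreeLieAlgebra.lift k (fun x => FreeLieAlgebra.of k (valX gr x)) with hψdef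
  have hψ : ∀ z, canPres k L (ψ z) = pi2 gr z := by
    intro z
    have : (canPres k L).comp ψ = pi2 gr := by
      apply FreeLieAlgebra.hom_ext
      intro x
      show canPres k L (ψ (FreeLieAlgebra.of k x)) = pi2 gr (FreeLieAlgebra.of k x)
      rw [hψdef, lift_of_apply, canPres_of]
      exact (lift_of_apply (valX gr) x).symm
    exact LieHom.congr_fun this z
  have hsurj := pi2_surjective gr
  set sec : L → FreeLieAlgebra k (XT gr) := fun a => (hsurj a).choose with hsecdef
  have hsec : ∀ a, pi2 gr (sec a) = a := fun a => (hsurj a).choose_spec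
  set φ : FreeLieAlgebra k L →ₗ⁅k⁆ FreeLieAlgebra k (XT gr) :=
    FreeLieAlgebra.lift k sec with hφdef
  have hφ : ∀ z, pi2 gr (φ z) = canPres k L z := by
    intro z
    have : (pi2 gr).comp φ = canPres k L := by
      apply FreeLieAlgebra.hom_ext
      intro a
      show pi2 gr (φ (FreeLieAlgebra.of k a)) = canPres k L (FreeLieAlgebra.of k a)
      rw [hφdef, lift_of_apply, canPres_of]
      exact hsec a
    exact LieHom.congr_fun this z
  -- the key step : R₂ ⊆ [R₂,F₂]
  have hstep : (LinearMap.ker (pi2 gr).toLinearMap :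
      Submodule k (FreeLieAlgebra k (XT gr))) ≤
      ((⁅(pi2 gr).ker, (⊤ : LieIdeal k (FreeLieAlgebra k (XT gr)))⁆ :
          LieIdeal k (FreeLieAlgebra k (XT gr))) :
        Submodule k (FreeLieAlgebra k (XT gr))) := by
    intro r hr
    have hr0 : pi2 gr r = 0 := hr
    have hrd := ker_le_derived gr hr
    have hψr1 : ψ r ∈ (canRel k L : Submodule k (FreeLieAlgebra k L)) := by
      have : ψ r ∈ canRel k L := by
        rw [canRel, LieHom.mem_ker, hψ r]
        exact hr0
      exact this
    have hψr2 := map_bracket_span ψ ⊤ ⊤ (fun a _ => trivial) hrd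
    have hHopf := hH2 (ψ r) hψr1 hψr2
    have hφψr := map_bracket_span φ (canRel k L) (pi2 gr).ker
      (fun a ha => by
        rw [LieHom.mem_ker, hφ a]
        rw [canRel, LieHom.mem_ker] at ha
        exact ha) hHopf
    have halpha := alpha_sub_mem (pi2 gr) (φ.comp ψ) (fun x => by
      rw [LieHom.comp_apply, hφ, hψ]) hrd
    have hre : r = (φ.comp ψ) r - ((φ.comp ψ) r - r) := (sub_sub_cancel _ _).symm
    rw [hre]
    refine Submodule.sub_mem _ ?_ halpha
    exact hφψr
  have hker := ker_pi2_eq_bot gr hstep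
  have hinj : Function.Injective (pi2 gr) := by
    have := (LinearMap.ker_eq_bot (M := FreeLieAlgebra k (XT gr)) (M₂ := L)
      (f := (pi2 gr).toLinearMap)).mp hker
    exact this
  exact ⟨XT gr, ⟨LieEquiv.ofBijective (pi2 gr) ⟨hinj, hsurj⟩⟩⟩

end Seg9

/-- An N-graded Lie algebra `L` over a field `k` is a free Lie algebra if and only if
`H₂(L,k) = 0` (computed via the Hopf formula from the canonical free presentation). -/
theorem gradedLie_free_iff_H2_eq_zero
    (L : Type u) [LieRing L] [LieAlgebra k L] (gr : LieGrading k L) :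
    (∃ X : Type u, Nonempty (FreeLieAlgebra k X ≃ₗ⁅k⁆ L)) ↔
      Subsingleton (hopfH2 k L) := by
  constructor
  · rintro ⟨X, ⟨e⟩⟩
    exact dir1 X e
  · intro h
    exact dir2 gr h
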